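/- Let n ≥ 2. On ℂ^{2n} with standard basis (e_j)_{1≤j≤2n}, let ⟨x,y⟩_q := (1/2)·Σ_{l=1}^n (x_l y_{n+l} + x_{n+l} y_l), and let P := span_ℂ{ e_j : j ≠ 1 and j ≠ n+1 }. For w ∈ P let M_w be the endomorphism of ℂ^{2n} given by M_w v = −⟨w,v⟩_q e₁ + ⟨e₁,v⟩_q w, and let V₁ := { M_w : w ∈ P } ⊆ M_{2n}(ℂ). Let SO(q,ℂ) := { g ∈ GL_{2n}(ℂ) : det g = 1 and ⟨gx, gy⟩_q = ⟨x,y⟩_q for all x,y }. Then for all h₁, h₂, h₃, h₄ ∈ SO(q,ℂ), the four subspaces h_a V₁ h_a^{-1} of M_{2n}(ℂ) (a = 1,…,4) are not in direct sum: there exist X_a ∈ h_a V₁ h_a^{-1}, not all zero, with X₁ + X₂ + X₃ + X₄ = 0. -/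

import Mathlib

noncomputable section

/-- The symmetric bilinear form `⟨x,y⟩_q = (1/2)·Σ_{l=1}^n (x_l y_{n+l} + x_{n+l} y_l)`
on `ℂ^{2n}` (indices written `0`-based). -/
def qform (n : ℕ) (x y : Fin (2 * n) → ℂ) : ℂ :=
  (1 / 2) * ∑ l : Fin n,
    (x ⟨l.1, by have := l.2; omega⟩ * y ⟨n + l.1, by have := l.2; omega⟩ +
      x ⟨n + l.1, by have := l.2; omega⟩ * y ⟨l.1, by have := l.2; omega⟩)

/-- The index `l` (`1 ≤ l ≤ n` in math notation) of `ℂ^{2n}`. -/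
def idxA {n : ℕ} (l : Fin n) : Fin (2 * n) := ⟨l.1, by have := l.2; omega⟩

/-- The index `n + l` (`1 ≤ l ≤ n` in math notation) of `ℂ^{2n}`. -/
def idxB {n : ℕ} (l : Fin n) : Fin (2 * n) := ⟨n + l.1, by have := l.2; omega⟩

/-- `Y_{1,l} = E_{1,l} − E_{n+l,n+1}`. -/
def Ymat {n : ℕ} (hn : 0 < n) (l : Fin n) : Matrix (Fin (2 * n)) (Fin (2 * n)) ℂ :=
  Matrix.single (idxA ⟨0, hn⟩) (idxA l) 1 -
    Matrix.single (idxB l) (idxB ⟨0, hn⟩) 1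

/-- `Z_{1,l} = E_{1,n+l} − E_{l,n+1}`. -/
def Zmat {n : ℕ} (hn : 0 < n) (l : Fin n) : Matrix (Fin (2 * n)) (Fin (2 * n)) ℂ :=
  Matrix.single (idxA ⟨0, hn⟩) (idxB l) 1 -
    Matrix.single (idxA l) (idxB ⟨0, hn⟩) 1

end


noncomputable section
namespace LemB4
open Matrix

variable {n : ℕ}

lemma qform_eq (x y : Fin (2*n) → ℂ) :
    qform n x y = (1/2) * ∑ l : Fin n, (x (idxA l) * y (idxB l) + x (idxB l) * y (idxA l)) := rfl

lemma qform_symm (x y : Fin (2*n) → ℂ) : qform n x y = qform n y x := by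
  simp only [qform_eq]; congr 1; apply Finset.sum_congr rfl; intro l _; ring

/-- qform as a bilinear map. -/
def qB (n : ℕ) : (Fin (2*n) → ℂ) →ₗ[ℂ] (Fin (2*n) → ℂ) →ₗ[ℂ] ℂ :=
  LinearMap.mk₂ ℂ (qform n)
    (by intro x y z; simp only [qform_eq, Pi.add_apply, ← Finset.sum_add_distrib, ← mul_add]
        congr 1; apply Finset.sum_congr rfl; intro l _; ring)
    (by intro c x y; simp only [qform_eq, Pi.smul_apply, smul_eq_mul, Finset.mul_sum]
        apply Finset.sum_congr rfl; intro l _; ring)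
    (by intro x y z; simp only [qform_eq, Pi.add_apply, ← Finset.sum_add_distrib, ← mul_add]
        congr 1; apply Finset.sum_congr rfl; intro l _; ring)
    (by intro c x y; simp only [qform_eq, Pi.smul_apply, smul_eq_mul, Finset.mul_sum]
        apply Finset.sum_congr rfl; intro l _; ring)

@[simp] lemma qB_apply (x y : Fin (2*n) → ℂ) : qB n x y = qform n x y := rfl

lemma idxA_injective : Function.Injective (idxA (n := n)) := by
  intro a b hab; exact Fin.ext (by simpa [idxA] using congrArg Fin.val hab)

lemma idxB_injective : Function.Injective (idxB (n := n)) := by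
  intro a b hab
  have := congrArg Fin.val hab
  simp [idxB] at this; exact Fin.ext this

lemma idxA_ne_idxB (l m : Fin n) : idxA l ≠ idxB m := by
  intro hc
  have := congrArg Fin.val hc
  simp [idxA, idxB] at this; omega

lemma qform_single_idxB (u : Fin (2*n) → ℂ) (l : Fin n) :
    qform n u (Pi.single (idxB l) 1) = u (idxA l) / 2 := by
  rw [qform_eq]
  rw [Finset.sum_eq_single l]
  · simp [Pi.single_apply, (idxA_ne_idxB l l).symm]; ring
  · intro m _ hml
    have h1 : idxB m ≠ idxB l := fun hc => hml (idxB_injective hc)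
    have h2 : idxA m ≠ idxB l := idxA_ne_idxB m l
    simp [Pi.single_apply, h1, h2]
  · simp

lemma qform_single_idxA (u : Fin (2*n) → ℂ) (l : Fin n) :
    qform n u (Pi.single (idxA l) 1) = u (idxB l) / 2 := by
  rw [qform_eq]
  rw [Finset.sum_eq_single l]
  · simp [Pi.single_apply, idxA_ne_idxB l l]; ring
  · intro m _ hml
    have h1 : idxA m ≠ idxA l := fun hc => hml (idxA_injective hc)
    have h2 : idxB m ≠ idxA l := (idxA_ne_idxB l m).symm
    simp [Pi.single_apply, h1, h2]
  · simp

/-- nondegeneracy -/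
lemma qform_nondeg (u : Fin (2*n) → ℂ) (hu : u ≠ 0) : ∃ v, qform n u v ≠ 0 := by
  obtain ⟨j, hj⟩ : ∃ j, u j ≠ 0 := by
    by_contra hc; push_neg at hc; exact hu (funext fun j => hc j)
  rcases lt_or_ge j.1 n with hjn | hjn
  · refine ⟨Pi.single (idxB ⟨j.1, hjn⟩) 1, ?_⟩
    rw [qform_single_idxB]
    have : idxA (n := n) ⟨j.1, hjn⟩ = j := Fin.ext rfl
    rw [this]; exact div_ne_zero hj two_ne_zero
  · have hj2 : j.1 - n < n := by have := j.2; omega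
    refine ⟨Pi.single (idxA ⟨j.1 - n, hj2⟩) 1, ?_⟩
    rw [qform_single_idxA]
    have : idxB (n := n) ⟨j.1 - n, hj2⟩ = j := Fin.ext (by simp [idxB]; omega)
    rw [this]; exact div_ne_zero hj two_ne_zero

/-- `Amat u x` is the matrix `v ↦ ⟨u,v⟩x − ⟨x,v⟩u` (the wedge `u ∧ x`). -/
def Amat (n : ℕ) (u x : Fin (2*n) → ℂ) : Matrix (Fin (2*n)) (Fin (2*n)) ℂ :=
  Matrix.of fun i j => qform n u (Pi.single j 1) * x i - qform n x (Pi.single j 1) * u i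

lemma Amat_apply (u x : Fin (2*n) → ℂ) (i j : Fin (2*n)) :
    Amat n u x i j = qform n u (Pi.single j 1) * x i - qform n x (Pi.single j 1) * u i := rfl

/-- Amat as a bilinear map. -/
def AB (n : ℕ) : (Fin (2*n) → ℂ) →ₗ[ℂ] (Fin (2*n) → ℂ) →ₗ[ℂ]
    Matrix (Fin (2*n)) (Fin (2*n)) ℂ :=
  LinearMap.mk₂ ℂ (Amat n)
    (by intro x y z; ext i j
        simp only [Amat_apply, Matrix.add_apply, Pi.add_apply]
        have : qform n (x + y) (Pi.single j 1)
            = qform n x (Pi.single j 1) + qform n y (Pi.single j 1) := by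
          rw [← qB_apply, ← qB_apply, ← qB_apply, map_add]; rfl
        rw [this]; ring)
    (by intro c x y; ext i j
        simp only [Amat_apply, Matrix.smul_apply, Pi.smul_apply, smul_eq_mul]
        have : qform n (c • x) (Pi.single j 1) = c * qform n x (Pi.single j 1) := by
          rw [← qB_apply, ← qB_apply, _root_.map_smul]; rfl
        rw [this]; ring)
    (by intro x y z; ext i j
        simp only [Amat_apply, Matrix.add_apply, Pi.add_apply]
        have : qform n (y + z) (Pi.single j 1)
            = qform n y (Pi.single j 1) + qform n z (Pi.single j 1) := by
          rw [← qB_apply, ← qB_apply, ← qB_apply, map_add]; rfl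
        rw [this]; ring)
    (by intro c x y; ext i j
        simp only [Amat_apply, Matrix.smul_apply, Pi.smul_apply, smul_eq_mul]
        have : qform n (c • y) (Pi.single j 1) = c * qform n y (Pi.single j 1) := by
          rw [← qB_apply, ← qB_apply, _root_.map_smul]; rfl
        rw [this]; ring)

@[simp] lemma AB_apply (u x : Fin (2*n) → ℂ) : AB n u x = Amat n u x := rfl

lemma Amat_antisymm (u x : Fin (2*n) → ℂ) : Amat n x u = -Amat n u x := by
  ext i j; simp only [Amat_apply, Matrix.neg_apply]; ring

@[simp] lemma Amat_self (u : Fin (2*n) → ℂ) : Amat n u u = 0 := by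
  ext i j; simp only [Amat_apply, Matrix.zero_apply]; ring

/-- expansion of `qform` along the standard basis -/
lemma qform_expand (u v : Fin (2*n) → ℂ) :
    ∑ j, qform n u (Pi.single j 1) * v j = qform n u v := by
  have h1 : v = ∑ j, Pi.single j (v j) := (Finset.univ_sum_single v).symm
  calc ∑ j, qform n u (Pi.single j 1) * v j
      = ∑ j, qB n u (Pi.single j (v j)) := by
        apply Finset.sum_congr rfl; intro j _
        have : Pi.single j (v j) = (v j • (Pi.single j 1 : Fin (2*n) → ℂ)) := by
          funext k; rw [Pi.smul_apply, Pi.single_apply, Pi.single_apply]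
          split <;> simp
        rw [this, _root_.map_smul, smul_eq_mul, qB_apply, mul_comm]
    _ = qB n u (∑ j, Pi.single j (v j)) := by rw [map_sum]
    _ = qform n u v := by rw [← h1, qB_apply]

lemma Amat_mulVec (u x v : Fin (2*n) → ℂ) :
    (Amat n u x) *ᵥ v = qform n u v • x - qform n x v • u := by
  funext i
  simp only [Matrix.mulVec, dotProduct, Amat_apply, Pi.sub_apply, Pi.smul_apply,
    smul_eq_mul, sub_mul]
  rw [Finset.sum_sub_distrib]
  congr 1
  · have e1 : ∑ j, qform n u (Pi.single j 1) * x i * v j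
        = (∑ j, qform n u (Pi.single j 1) * v j) * x i := by
      rw [Finset.sum_mul]; apply Finset.sum_congr rfl; intro j _; ring
    rw [e1, qform_expand]
  · have e2 : ∑ j, qform n x (Pi.single j 1) * u i * v j
        = (∑ j, qform n x (Pi.single j 1) * v j) * u i := by
      rw [Finset.sum_mul]; apply Finset.sum_congr rfl; intro j _; ring
    rw [e2, qform_expand]

/-- matrices are determined by their action on vectors -/
lemma matrix_ext_mulVec {M N : Matrix (Fin (2*n)) (Fin (2*n)) ℂ}
    (H : ∀ v, M *ᵥ v = N *ᵥ v) : M = N := by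
  ext i j
  have := congrFun (H (Pi.single j 1)) i
  simpa [Matrix.mulVec_single] using this

/-- nonvanishing of `Amat` -/
lemma Amat_ne_zero (u x : Fin (2*n) → ℂ) (hu : u ≠ 0) (hx : ∀ c : ℂ, x ≠ c • u) :
    Amat n u x ≠ 0 := by
  intro hc
  obtain ⟨v, hv⟩ := qform_nondeg u hu
  have h0 : qform n u v • x - qform n x v • u = 0 := by
    rw [← Amat_mulVec, hc, Matrix.zero_mulVec]
  have : x = ((qform n u v)⁻¹ * qform n x v) • u := by
    have := sub_eq_zero.mp h0
    rw [mul_smul]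
    rw [← this, smul_smul, inv_mul_cancel₀ hv, one_smul]
  exact hx _ this

variable (hn : 1 < n)

lemma i0_eq : (⟨0, by omega⟩ : Fin (2*n)) = idxA ⟨0, by omega⟩ := rfl

lemma qform_e1_left (v : Fin (2*n) → ℂ) :
    qform n (Pi.single (⟨0, by omega⟩ : Fin (2*n)) 1) v = v ⟨n, by omega⟩ / 2 := by
  rw [qform_symm, i0_eq hn, qform_single_idxA]
  have : idxB (n := n) ⟨0, by omega⟩ = ⟨n, by omega⟩ := Fin.ext (by simp [idxB])
  rw [this]

lemma coe_inv_mul (g : GL (Fin (2*n)) ℂ) :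
    (g : Matrix (Fin (2*n)) (Fin (2*n)) ℂ) * ((g⁻¹ : GL (Fin (2*n)) ℂ) : Matrix (Fin (2*n)) (Fin (2*n)) ℂ) = 1 :=
  Units.mul_inv g

lemma conj_eq (e1 : Fin (2 * n) → ℂ)
    (he1 : e1 = Pi.single (⟨0, by omega⟩ : Fin (2 * n)) 1)
    (Mf : (Fin (2 * n) → ℂ) → Matrix (Fin (2 * n)) (Fin (2 * n)) ℂ)
    (hMf : ∀ w v : Fin (2 * n) → ℂ,
      (Mf w).mulVec v = (-(qform n w v)) • e1 + (qform n e1 v) • w)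
    (g : GL (Fin (2 * n)) ℂ)
    (hg : ∀ x y, qform n ((g : Matrix (Fin (2*n)) (Fin (2*n)) ℂ) *ᵥ x)
      ((g : Matrix (Fin (2*n)) (Fin (2*n)) ℂ) *ᵥ y) = qform n x y)
    (w : Fin (2*n) → ℂ) :
    (g : Matrix (Fin (2*n)) (Fin (2*n)) ℂ) * Mf w * ((g⁻¹ : GL (Fin (2*n)) ℂ) : Matrix (Fin (2*n)) (Fin (2*n)) ℂ)
      = Amat n ((g : Matrix (Fin (2*n)) (Fin (2*n)) ℂ) *ᵥ e1)
          ((g : Matrix (Fin (2*n)) (Fin (2*n)) ℂ) *ᵥ w) := by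
  set G : Matrix (Fin (2*n)) (Fin (2*n)) ℂ := (g : Matrix (Fin (2*n)) (Fin (2*n)) ℂ) with hG
  set Gi : Matrix (Fin (2*n)) (Fin (2*n)) ℂ := ((g⁻¹ : GL (Fin (2*n)) ℂ) : Matrix (Fin (2*n)) (Fin (2*n)) ℂ) with hGi
  apply matrix_ext_mulVec
  intro v
  have hGGi : ∀ z, G *ᵥ (Gi *ᵥ z) = z := by
    intro z; rw [Matrix.mulVec_mulVec, coe_inv_mul g, Matrix.one_mulVec]
  have key : (G * Mf w * Gi) *ᵥ v = G *ᵥ (Mf w *ᵥ (Gi *ᵥ v)) := by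
    rw [Matrix.mulVec_mulVec, Matrix.mulVec_mulVec, Matrix.mul_assoc]
  rw [key, hMf, Matrix.mulVec_add, Matrix.mulVec_smul, Matrix.mulVec_smul]
  rw [Amat_mulVec]
  have h1 : qform n w (Gi *ᵥ v) = qform n (G *ᵥ w) v := by
    rw [← hg w (Gi *ᵥ v), hGGi]
  have h2 : qform n e1 (Gi *ᵥ v) = qform n (G *ᵥ e1) v := by
    rw [← hg e1 (Gi *ᵥ v), hGGi]
  rw [h1, h2]
  module

section withP

variable (P : Submodule ℂ (Fin (2 * n) → ℂ))
    (hP : P = Submodule.span ℂ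
      {v : Fin (2 * n) → ℂ | ∃ j : Fin (2 * n), j.1 ≠ 0 ∧ j.1 ≠ n ∧ v = Pi.single j 1})

include hP

lemma mem_P (v : Fin (2*n) → ℂ) (h0 : v ⟨0, by omega⟩ = 0) (hN : v ⟨n, by omega⟩ = 0) :
    v ∈ P := by
  have hv : v = ∑ j, Pi.single j (v j) := (Finset.univ_sum_single v).symm
  rw [hv]
  apply Submodule.sum_mem
  intro j _
  by_cases hj : v j = 0
  · rw [hj]; simp
  · have hj0 : j.1 ≠ 0 := by
      intro hc; apply hj
      have : j = (⟨0, by omega⟩ : Fin (2*n)) := Fin.ext hc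
      rw [this]; exact h0
    have hjN : j.1 ≠ n := by
      intro hc; apply hj
      have : j = (⟨n, by omega⟩ : Fin (2*n)) := Fin.ext hc
      rw [this]; exact hN
    have hsingle : Pi.single j (v j) = (v j • (Pi.single j 1 : Fin (2*n) → ℂ)) := by
      funext k; rw [Pi.smul_apply, Pi.single_apply, Pi.single_apply]
      split <;> simp
    rw [hsingle, hP]
    exact Submodule.smul_mem _ _ (Submodule.subset_span ⟨j, hj0, hjN, rfl⟩)

/-- Realization: any `Amat (u a) x` with `x ⊥ u a` is a conjugate of some `Mf w`, `w ∈ P`. -/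
lemma realize (e1 : Fin (2 * n) → ℂ)
    (he1 : e1 = Pi.single (⟨0, by omega⟩ : Fin (2 * n)) 1)
    (Mf : (Fin (2 * n) → ℂ) → Matrix (Fin (2 * n)) (Fin (2 * n)) ℂ)
    (hMf : ∀ w v : Fin (2 * n) → ℂ,
      (Mf w).mulVec v = (-(qform n w v)) • e1 + (qform n e1 v) • w)
    (g : GL (Fin (2 * n)) ℂ)
    (hg : ∀ x y, qform n ((g : Matrix (Fin (2*n)) (Fin (2*n)) ℂ) *ᵥ x)
      ((g : Matrix (Fin (2*n)) (Fin (2*n)) ℂ) *ᵥ y) = qform n x y)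
    (x : Fin (2*n) → ℂ)
    (hx : qform n ((g : Matrix (Fin (2*n)) (Fin (2*n)) ℂ) *ᵥ e1) x = 0) :
    ∃ w ∈ P, (g : Matrix (Fin (2*n)) (Fin (2*n)) ℂ) * Mf w *
        ((g⁻¹ : GL (Fin (2*n)) ℂ) : Matrix (Fin (2*n)) (Fin (2*n)) ℂ)
      = Amat n ((g : Matrix (Fin (2*n)) (Fin (2*n)) ℂ) *ᵥ e1) x := by
  set G : Matrix (Fin (2*n)) (Fin (2*n)) ℂ := (g : Matrix (Fin (2*n)) (Fin (2*n)) ℂ) with hG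
  set Gi : Matrix (Fin (2*n)) (Fin (2*n)) ℂ := ((g⁻¹ : GL (Fin (2*n)) ℂ) : Matrix (Fin (2*n)) (Fin (2*n)) ℂ) with hGi
  have hGGi : ∀ z, G *ᵥ (Gi *ᵥ z) = z := by
    intro z; rw [Matrix.mulVec_mulVec, coe_inv_mul g, Matrix.one_mulVec]
  set y : Fin (2*n) → ℂ := Gi *ᵥ x with hy
  have hGy : G *ᵥ y = x := hGGi x
  -- y has vanishing n-th coordinate
  have hyN : y ⟨n, by omega⟩ = 0 := by
    have h1 : qform n e1 y = 0 := by
      rw [← hg e1 y, hGy]; exact hx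
    rw [he1, qform_e1_left hn] at h1
    field_simp at h1
    simpa using h1
  set w : Fin (2*n) → ℂ := y - (y ⟨0, by omega⟩) • e1 with hw
  have hwP : w ∈ P := by
    apply mem_P hn P hP
    · rw [hw]; simp [he1]
    · rw [hw]
      have : e1 ⟨n, by omega⟩ = 0 := by
        rw [he1]; apply Pi.single_eq_of_ne
        intro hc
        have := congrArg Fin.val hc
        simp at this; omega
      simp [this, hyN]
  refine ⟨w, hwP, ?_⟩
  rw [conj_eq hn e1 he1 Mf hMf g hg w]
  have hGw : G *ᵥ w = x - (y ⟨0, by omega⟩) • (G *ᵥ e1) := by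
    rw [hw, Matrix.mulVec_sub, Matrix.mulVec_smul, hGy]
  rw [hGw]
  have := (AB n (G *ᵥ e1)).map_sub x ((y ⟨0, by omega⟩) • (G *ᵥ e1))
  simp only [AB_apply] at this
  rw [this]
  have h2 : Amat n (G *ᵥ e1) ((y ⟨0, by omega⟩) • (G *ᵥ e1)) = 0 := by
    have := (AB n (G *ᵥ e1)).map_smul (y ⟨0, by omega⟩) (G *ᵥ e1)
    simp only [AB_apply] at this
    rw [this, Amat_self, smul_zero]
  rw [h2, sub_zero]

end withP


/-- Common construction: a dependency `∑ s c • u c = 0` plus a common vector `x` yields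
a nontrivial relation. -/
lemma build (u : Fin 4 → (Fin (2*n) → ℂ)) (hu0 : ∀ a, u a ≠ 0)
    (s : Fin 4 → ℂ) (hsum : ∑ c, s c • u c = 0)
    (x : Fin (2*n) → ℂ)
    (hqx : ∀ c, s c ≠ 0 → qform n (u c) x = 0)
    (c₀ : Fin 4) (hc₀ : s c₀ ≠ 0) (hx : ∀ c' : ℂ, x ≠ c' • u c₀) :
    ∃ xf : Fin 4 → (Fin (2*n) → ℂ),
      (∀ a, qform n (u a) (xf a) = 0) ∧
      (∃ a, Amat n (u a) (xf a) ≠ 0) ∧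
      ∑ a, Amat n (u a) (xf a) = 0 := by
  refine ⟨fun c => s c • x, ?_, ?_, ?_⟩
  · intro a
    have hsm : qform n (u a) (s a • x) = s a * qform n (u a) x := by
      have h := (qB n (u a)).map_smul (s a) x
      rw [smul_eq_mul] at h
      exact h
    rw [hsm]
    by_cases hsa : s a = 0
    · rw [hsa, zero_mul]
    · rw [hqx a hsa, mul_zero]
  · refine ⟨c₀, ?_⟩
    have hsm : Amat n (u c₀) (s c₀ • x) = s c₀ • Amat n (u c₀) x :=
      (AB n (u c₀)).map_smul (s c₀) x
    rw [hsm]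
    exact smul_ne_zero hc₀ (Amat_ne_zero (u c₀) x (hu0 c₀) hx)
  · have key : ∀ a, Amat n (u a) (s a • x) = ((AB n).flip x) (s a • u a) := by
      intro a
      have h1 := (AB n (u a)).map_smul (s a) x
      have h2 := ((AB n).flip x).map_smul (s a) (u a)
      simp only [AB_apply] at h1
      simp only [LinearMap.map_smul, LinearMap.flip_apply, AB_apply] at h2 ⊢
      rw [h1, h2]
    rw [Finset.sum_congr rfl (fun a _ => key a), ← _root_.map_sum, hsum, _root_.map_zero]

/-- The combinatorial core. -/
lemma core (hn : 2 ≤ n) (u : Fin 4 → (Fin (2*n) → ℂ)) (hu0 : ∀ a, u a ≠ 0) :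
    ∃ xf : Fin 4 → (Fin (2*n) → ℂ),
      (∀ a, qform n (u a) (xf a) = 0) ∧
      (∃ a, Amat n (u a) (xf a) ≠ 0) ∧
      ∑ a, Amat n (u a) (xf a) = 0 := by
  by_cases hLI : LinearIndependent ℂ u
  · -- the four vectors are linearly independent
    set c : Fin 4 → Fin 4 → ℂ := fun a b => qform n (u a) (u b) with hcdef
    set T : (Fin 6 → ℂ) → Fin 4 → Fin 4 → ℂ := fun z =>
      ![![0, z 0, z 1, z 2], ![z 0, 0, z 3, z 4],
        ![z 1, z 3, 0, z 5], ![z 2, z 4, z 5, 0]] with hT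
    have Tsymm : ∀ z a b, T z a b = T z b a := by
      intro z a b; fin_cases a <;> fin_cases b <;> simp [hT]
    have Tadd : ∀ z z' a b, T (z + z') a b = T z a b + T z' a b := by
      intro z z' a b; fin_cases a <;> fin_cases b <;> simp [hT]
    have Tsmul : ∀ (r : ℂ) z a b, T (r • z) a b = r * T z a b := by
      intro r z a b; fin_cases a <;> fin_cases b <;> simp [hT]
    let ψ : (Fin 6 → ℂ) →ₗ[ℂ] (Fin 4 → ℂ) :=
      { toFun := fun z a => ∑ b, T z a b * c a b
        map_add' := by
          intro z z'; funext a
          simp only [Tadd, add_mul, Pi.add_apply]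
          rw [Finset.sum_add_distrib]
        map_smul' := by
          intro r z; funext a
          simp only [Tsmul, Pi.smul_apply, smul_eq_mul, RingHom.id_apply]
          rw [Finset.mul_sum]
          apply Finset.sum_congr rfl; intro b _; ring }
    obtain ⟨z, hz0, hzker⟩ : ∃ z : Fin 6 → ℂ, z ≠ 0 ∧ ψ z = 0 := by
      by_contra hcon; push_neg at hcon
      have hinj : Function.Injective ψ := by
        rw [← LinearMap.ker_eq_bot, Submodule.eq_bot_iff]
        intro z hz
        by_contra hz0
        exact hcon z hz0 hz
      have hle := LinearMap.finrank_le_finrank_of_injective hinj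
      rw [Module.finrank_pi ℂ, Module.finrank_pi ℂ] at hle
      simp [Fintype.card_fin] at hle
    obtain ⟨a₁, b₁, hab, hTab⟩ : ∃ a b, a ≠ b ∧ T z a b ≠ 0 := by
      obtain ⟨k, hk⟩ : ∃ k, z k ≠ 0 := by
        by_contra hk; push_neg at hk; exact hz0 (funext hk)
      fin_cases k
      · exact ⟨0, 1, by decide, by simpa [hT] using hk⟩
      · exact ⟨0, 2, by decide, by simpa [hT] using hk⟩
      · exact ⟨0, 3, by decide, by simpa [hT] using hk⟩
      · exact ⟨1, 2, by decide, by simpa [hT] using hk⟩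
      · exact ⟨1, 3, by decide, by simpa [hT] using hk⟩
      · exact ⟨2, 3, by decide, by simpa [hT] using hk⟩
    refine ⟨fun a => ∑ b, T z a b • u b, ?_, ?_, ?_⟩
    · intro a
      have hexp : qB n (u a) (∑ b, T z a b • u b) = ∑ b, T z a b * c a b := by
        rw [_root_.map_sum]
        apply Finset.sum_congr rfl; intro b _
        have := (qB n (u a)).map_smul (T z a b) (u b)
        rw [this, smul_eq_mul]; rfl
      have := congrFun hzker a
      simp only [Pi.zero_apply] at this
      rw [← qB_apply, hexp]
      exact this
    · refine ⟨a₁, ?_⟩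
      apply Amat_ne_zero _ _ (hu0 a₁)
      intro c' hcontra
      have hLI' := Fintype.linearIndependent_iff.mp hLI
        (fun b => T z a₁ b - if b = a₁ then c' else 0)
      have hz' : ∑ b, (T z a₁ b - if b = a₁ then c' else 0) • u b = 0 := by
        have e1 : ∀ b, (T z a₁ b - if b = a₁ then c' else 0) • u b
            = T z a₁ b • u b - (if b = a₁ then c' • u b else 0) := by
          intro b
          rw [sub_smul]
          congr 1
          split <;> simp
        rw [Finset.sum_congr rfl (fun b _ => e1 b), Finset.sum_sub_distrib,
          Finset.sum_ite_eq']
        simp only [Finset.mem_univ, if_true]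
        rw [← hcontra]
        exact sub_self _
      have := hLI' hz' b₁
      rw [if_neg (Ne.symm hab)] at this
      simp only [sub_zero] at this
      exact hTab this
    · have hexp : ∀ a, Amat n (u a) (∑ b, T z a b • u b)
          = ∑ b, T z a b • Amat n (u a) (u b) := by
        intro a
        rw [← AB_apply, _root_.map_sum]
        apply Finset.sum_congr rfl; intro b _
        have := (AB n (u a)).map_smul (T z a b) (u b)
        simpa using this
      rw [Finset.sum_congr rfl (fun a _ => hexp a)]
      set S := ∑ a, ∑ b, T z a b • Amat n (u a) (u b) with hSdef
      have hS : S = -S := by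
        calc S = ∑ b, ∑ a, T z a b • Amat n (u a) (u b) := Finset.sum_comm
        _ = ∑ p, ∑ q, -(T z p q • Amat n (u p) (u q)) := by
            apply Finset.sum_congr rfl; intro p _
            apply Finset.sum_congr rfl; intro q _
            rw [Tsymm z q p, Amat_antisymm, smul_neg]
        _ = -S := by rw [hSdef]; simp [Finset.sum_neg_distrib]
      have h2S : (2:ℂ) • S = 0 := by
        rw [two_smul]
        nth_rewrite 1 [hS]
        simp
      rcases smul_eq_zero.mp h2S with h | h
      · exact absurd h two_ne_zero
      · exact h
  · -- the four vectors are linearly dependent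
    obtain ⟨s, hsum, a₀, hsa₀⟩ := Fintype.not_linearIndependent_iff.mp hLI
    obtain ⟨b, hba, hsb⟩ : ∃ b, b ≠ a₀ ∧ s b ≠ 0 := by
      by_contra hcon; push_neg at hcon
      have heq : ∑ c, s c • u c = s a₀ • u a₀ := by
        rw [Finset.sum_eq_single a₀]
        · intro c _ hc; rw [hcon c hc, zero_smul]
        · intro hmem; exact absurd (Finset.mem_univ a₀) hmem
      rw [heq] at hsum
      rcases smul_eq_zero.mp hsum with h | h
      · exact hsa₀ h
      · exact hu0 a₀ h
    by_cases hdep : ∃ τ : ℂ, u b = τ • u a₀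
    · -- u b is a multiple of u a₀
      obtain ⟨τ, hτ⟩ := hdep
      have hτ0 : τ ≠ 0 := by
        intro hc; rw [hc, zero_smul] at hτ; exact hu0 b hτ
      obtain ⟨x, hxK, hxns⟩ : ∃ x, qform n (u a₀) x = 0 ∧ ∀ c' : ℂ, x ≠ c' • u a₀ := by
        set ℓ := qB n (u a₀) with hℓ
        have hker : 3 ≤ Module.finrank ℂ (LinearMap.ker ℓ) := by
          have h1 := LinearMap.finrank_range_add_finrank_ker ℓ
          have h2 : Module.finrank ℂ (LinearMap.range ℓ) ≤ 1 := by
            have := Submodule.finrank_le (LinearMap.range ℓ)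
            simpa using this
          have h3 : Module.finrank ℂ (Fin (2*n) → ℂ) = 2*n := by
            rw [Module.finrank_pi]; simp
          rw [h3] at h1
          omega
        by_contra hcon; push_neg at hcon
        have hle : (LinearMap.ker ℓ : Submodule ℂ _) ≤ Submodule.span ℂ {u a₀} := by
          intro x hx
          obtain ⟨c', hc'⟩ := hcon x (by simpa [hℓ] using hx)
          exact (Submodule.mem_span_singleton).mpr ⟨c', hc'.symm⟩
        have hmono := Submodule.finrank_mono hle
        rw [finrank_span_singleton (hu0 a₀)] at hmono
        omega
      set s' : Fin 4 → ℂ := fun c => if c = a₀ then τ else if c = b then -1 else 0 with hs'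
      have hsum' : ∑ c, s' c • u c = 0 := by
        have e1 : ∀ cc, s' cc • u cc
            = (if cc = a₀ then τ • u a₀ else 0) + (if cc = b then (-1:ℂ) • u b else 0) := by
          intro cc
          by_cases h1 : cc = a₀
          · subst h1
            have hne : cc ≠ b := Ne.symm hba
            simp [hs', hne]
          · by_cases h2 : cc = b
            · subst h2
              simp [hs', h1]
            · simp [hs', h1, h2]
        rw [Finset.sum_congr rfl (fun cc _ => e1 cc), Finset.sum_add_distrib,
          Finset.sum_ite_eq', Finset.sum_ite_eq']
        simp only [Finset.mem_univ, if_true]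
        rw [hτ]
        module
      refine build u hu0 s' hsum' x ?_ a₀ (by simpa [hs'] using hτ0) hxns
      intro cc hcc
      by_cases h1 : cc = a₀
      · subst h1; exact hxK
      · by_cases h2 : cc = b
        · subst h2
          rw [hτ]
          have h := LinearMap.map_smul₂ (qB n) τ (u a₀) x
          calc qform n (τ • u a₀) x = τ • qform n (u a₀) x := h
          _ = 0 := by rw [hxK, smul_zero]
        · exfalso; apply hcc; simp [hs', h1, h2]
    · push_neg at hdep
      -- u b is not a multiple of u a₀
      set g : (Fin (2*n) → ℂ) →ₗ[ℂ] (Fin 4 → ℂ) := LinearMap.pi (fun cc => qB n (u cc)) with hg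
      set ℓ : (Fin 4 → ℂ) →ₗ[ℂ] ℂ := ∑ cc, s cc • LinearMap.proj cc with hℓ
      have hℓsingle : ℓ (Pi.single a₀ 1) = s a₀ := by
        simp [hℓ, LinearMap.sum_apply, LinearMap.smul_apply, LinearMap.proj_apply,
          Pi.single_apply, mul_ite, Finset.sum_ite_eq']
      have hrange : LinearMap.range g ≤ LinearMap.ker ℓ := by
        rintro _ ⟨v, rfl⟩
        simp only [LinearMap.mem_ker]
        have h1 : ℓ (g v) = ∑ cc, s cc * qform n (u cc) v := by
          simp [hℓ, hg, LinearMap.sum_apply, LinearMap.smul_apply, LinearMap.proj_apply,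
            LinearMap.pi_apply]
        rw [h1]
        calc ∑ cc, s cc * qform n (u cc) v
            = ∑ cc, ((qB n).flip v) (s cc • u cc) := by
              apply Finset.sum_congr rfl; intro cc _
              rw [LinearMap.map_smul, LinearMap.flip_apply, qB_apply, smul_eq_mul]
          _ = ((qB n).flip v) (∑ cc, s cc • u cc) := (_root_.map_sum _ _ _).symm
          _ = 0 := by rw [hsum, _root_.map_zero]
      have hkerg : 0 < Module.finrank ℂ (LinearMap.ker g) := by
        have h1 := LinearMap.finrank_range_add_finrank_ker g
        have h2 : Module.finrank ℂ (LinearMap.range g)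
            ≤ Module.finrank ℂ (LinearMap.ker ℓ) := Submodule.finrank_mono hrange
        have h3 : Module.finrank ℂ (LinearMap.ker ℓ) ≤ 3 := by
          have h4 := LinearMap.finrank_range_add_finrank_ker ℓ
          have h5 : 0 < Module.finrank ℂ (LinearMap.range ℓ) := by
            rw [Module.finrank_pos_iff]
            refine ⟨⟨ℓ (Pi.single a₀ 1), LinearMap.mem_range_self _ _⟩, 0, ?_⟩
            intro hc
            rw [Subtype.ext_iff] at hc
            simp only [Submodule.coe_zero] at hc
            rw [hℓsingle] at hc
            exact hsa₀ hc
          have h7 : Module.finrank ℂ (Fin 4 → ℂ) = 4 := by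
            rw [Module.finrank_pi]; simp
          rw [h7] at h4
          omega
        have h8 : Module.finrank ℂ (Fin (2*n) → ℂ) = 2*n := by
          rw [Module.finrank_pi]; simp
        rw [h8] at h1
        omega
      obtain ⟨x, hxK, hx0⟩ : ∃ x, x ∈ LinearMap.ker g ∧ x ≠ 0 := by
        have : Nontrivial (LinearMap.ker g) := Module.nontrivial_of_finrank_pos hkerg
        obtain ⟨⟨x, hx⟩, hne⟩ := exists_ne (0 : LinearMap.ker g)
        exact ⟨x, hx, by simpa [Subtype.ext_iff] using hne⟩
      have hq0 : ∀ cc, qform n (u cc) x = 0 := by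
        intro cc
        have := congrFun (LinearMap.mem_ker.mp hxK) cc
        simpa [hg, LinearMap.pi_apply] using this
      by_cases hxa : ∀ c' : ℂ, x ≠ c' • u a₀
      · exact build u hu0 s hsum x (fun cc _ => hq0 cc) a₀ hsa₀ hxa
      · push_neg at hxa
        obtain ⟨α, hα⟩ := hxa
        have hα0 : α ≠ 0 := by
          intro hc; rw [hc, zero_smul] at hα; exact hx0 hα
        have hxb : ∀ c' : ℂ, x ≠ c' • u b := by
          intro β hβ
          have hβ0 : β ≠ 0 := by
            intro hc; rw [hc, zero_smul] at hβ; exact hx0 hβ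
          apply hdep (β⁻¹ * α)
          rw [mul_smul, ← hα, hβ, ← mul_smul, inv_mul_cancel₀ hβ0,
            one_smul]
        exact build u hu0 s hsum x (fun cc _ => hq0 cc) b hsb hxb

end LemB4
end

/-- **Lemma B.4 (complex-case).**
Let `n ≥ 2`.  On `ℂ^{2n}`, let `P = span{e_j : j ≠ 1, n+1}` and, for `w ∈ P`, let `M_w` be
the matrix acting by `M_w v = −⟨w,v⟩_q e₁ + ⟨e₁,v⟩_q w`; set `V₁ = {M_w : w ∈ P}`.
For all `h₁, h₂, h₃, h₄ ∈ SO(q,ℂ)`, the four subspaces `h_a V₁ h_a⁻¹` of `M_{2n}(ℂ)` are not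
in direct sum: some nontrivial choice `X_a ∈ h_a V₁ h_a⁻¹` sums to zero. -/
theorem stmt_12 (n : ℕ) (hn : 2 ≤ n)
    (e1 : Fin (2 * n) → ℂ)
    (he1 : e1 = Pi.single (⟨0, by omega⟩ : Fin (2 * n)) 1)
    (P : Submodule ℂ (Fin (2 * n) → ℂ))
    (hP : P = Submodule.span ℂ
      {v : Fin (2 * n) → ℂ | ∃ j : Fin (2 * n), j.1 ≠ 0 ∧ j.1 ≠ n ∧ v = Pi.single j 1})
    (Mf : (Fin (2 * n) → ℂ) → Matrix (Fin (2 * n)) (Fin (2 * n)) ℂ)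
    (hMf : ∀ w v : Fin (2 * n) → ℂ,
      (Mf w).mulVec v = (-(qform n w v)) • e1 + (qform n e1 v) • w)
    (h : Fin 4 → GL (Fin (2 * n)) ℂ)
    (hdet : ∀ a, Matrix.det (h a : Matrix (Fin (2 * n)) (Fin (2 * n)) ℂ) = 1)
    (hq : ∀ (a : Fin 4) (x y : Fin (2 * n) → ℂ),
      qform n ((h a : Matrix (Fin (2 * n)) (Fin (2 * n)) ℂ).mulVec x)
          ((h a : Matrix (Fin (2 * n)) (Fin (2 * n)) ℂ).mulVec y) = qform n x y) :
    ∃ X : Fin 4 → Matrix (Fin (2 * n)) (Fin (2 * n)) ℂ,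
      (∀ a, ∃ w ∈ P, X a =
        (h a : Matrix (Fin (2 * n)) (Fin (2 * n)) ℂ) * Mf w *
          ((h a)⁻¹ : GL (Fin (2 * n)) ℂ)) ∧
      (∃ a, X a ≠ 0) ∧ ∑ a, X a = 0 := by
  classical
  set u : Fin 4 → (Fin (2*n) → ℂ) :=
    fun a => (h a : Matrix (Fin (2*n)) (Fin (2*n)) ℂ).mulVec e1 with hu
  have he1ne : e1 ≠ 0 := by
    intro hc
    have h1 := congrFun hc (⟨0, by omega⟩ : Fin (2*n))
    rw [he1, Pi.single_eq_same] at h1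
    simp at h1
  have hu0 : ∀ a, u a ≠ 0 := by
    intro a hc
    apply he1ne
    have h2 : (((h a)⁻¹ : GL (Fin (2*n)) ℂ) : Matrix (Fin (2*n)) (Fin (2*n)) ℂ).mulVec (u a)
        = e1 := by
      rw [hu]
      dsimp only
      rw [Matrix.mulVec_mulVec]
      rw [show (((h a)⁻¹ : GL (Fin (2*n)) ℂ) : Matrix (Fin (2*n)) (Fin (2*n)) ℂ)
          * ((h a : Matrix (Fin (2*n)) (Fin (2*n)) ℂ)) = 1 from Units.inv_mul (h a)]
      rw [Matrix.one_mulVec]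
    rw [hc, Matrix.mulVec_zero] at h2
    exact h2.symm
  obtain ⟨xf, hq0, ⟨a₁, hA⟩, hsum0⟩ := LemB4.core hn u hu0
  have hreal : ∀ a, ∃ w ∈ P,
      (h a : Matrix (Fin (2*n)) (Fin (2*n)) ℂ) * Mf w *
        ((h a)⁻¹ : GL (Fin (2*n)) ℂ) = LemB4.Amat n (u a) (xf a) :=
    fun a => LemB4.realize hn P hP e1 he1 Mf hMf (h a) (hq a) (xf a) (hq0 a)
  choose w hwP hweq using hreal
  exact ⟨fun a => LemB4.Amat n (u a) (xf a),
    fun a => ⟨w a, hwP a, (hweq a).symm⟩, ⟨a₁, hA⟩, hsum0⟩
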